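/- Let a₁, a₂ ∈ ℂ. There exists a holomorphic function f : 𝔻 → ℂ with sup_{z∈𝔻}|f(z)| ≤ 1, f(0) = 0, f′(0) = a₁, and f″(0) = 2a₂ if and only if |a₁|² + |a₂| ≤ 1. -/

import Mathlib

open Metric Set Complex

lemma cf_mobius_sq (a w : ℂ) :
    ‖1 - (starRingEnd ℂ) a * w‖ ^ 2 - ‖w - a‖ ^ 2 = (1 - ‖a‖ ^ 2) * (1 - ‖w‖ ^ 2) := by
  simp only [Complex.sq_norm, Complex.normSq_apply,
    Complex.sub_re, Complex.sub_im, Complex.mul_re, Complex.mul_im, Complex.one_re,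
    Complex.one_im, Complex.conj_re, Complex.conj_im]
  ring

lemma cf_mobius_le {a w : ℂ} (ha : ‖a‖ ≤ 1) (hw : ‖w‖ ≤ 1) :
    ‖w - a‖ ≤ ‖1 - (starRingEnd ℂ) a * w‖ := by
  have h := cf_mobius_sq a w
  have ha2 : ‖a‖ ^ 2 ≤ 1 := by nlinarith [norm_nonneg a]
  have hw2 : ‖w‖ ^ 2 ≤ 1 := by nlinarith [norm_nonneg w]
  have hp : (0:ℝ) ≤ (1 - ‖a‖ ^ 2) * (1 - ‖w‖ ^ 2) :=
    mul_nonneg (by linarith) (by linarith)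
  nlinarith [norm_nonneg (w - a), norm_nonneg (1 - (starRingEnd ℂ) a * w)]

lemma cf_mobius_lt {a w : ℂ} (ha : ‖a‖ < 1) (hw : ‖w‖ < 1) :
    ‖w - a‖ < ‖1 - (starRingEnd ℂ) a * w‖ := by
  have h := cf_mobius_sq a w
  have ha2 : ‖a‖ ^ 2 < 1 := by nlinarith [norm_nonneg a]
  have hw2 : ‖w‖ ^ 2 < 1 := by nlinarith [norm_nonneg w]
  have hp : (0:ℝ) < (1 - ‖a‖ ^ 2) * (1 - ‖w‖ ^ 2) :=
    mul_pos (by linarith) (by linarith)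
  nlinarith [norm_nonneg (w - a), norm_nonneg (1 - (starRingEnd ℂ) a * w)]

/-- Max modulus dichotomy on the unit ball. -/
lemma cf_dichotomy {f : ℂ → ℂ} (hd : DifferentiableOn ℂ f (ball 0 1))
    (hb : ∀ z ∈ ball (0 : ℂ) 1, ‖f z‖ ≤ 1) :
    MapsTo f (ball 0 1) (ball 0 1) ∨ EqOn f (fun _ => f 0) (ball 0 1) := by
  by_cases h : ∃ z₀ ∈ ball (0 : ℂ) 1, ‖f z₀‖ = 1
  · obtain ⟨z₀, hz₀, hmax⟩ := h
    right
    have hmaxon : IsMaxOn (norm ∘ f) (ball 0 1) z₀ := fun z hz => by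
      simp only [Function.comp_apply, hmax]; exact hb z hz
    have heq := Complex.eqOn_of_isPreconnected_of_isMaxOn_norm
      (convex_ball (0 : ℂ) 1).isPreconnected isOpen_ball hd hz₀ hmaxon
    intro z hz
    have h0 := heq (mem_ball_self (by norm_num : (0:ℝ) < 1))
    simp only [heq hz, Function.const_apply, h0]
  · left
    intro z hz
    push_neg at h
    rw [mem_ball, dist_zero_right]
    exact lt_of_le_of_ne (hb z hz) (h z hz)


lemma cf_backward (a₁ a₂ : ℂ) (h : ‖a₁‖ ^ 2 + ‖a₂‖ ≤ 1) :
    ∃ f : ℂ → ℂ, DifferentiableOn ℂ f (ball 0 1) ∧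
        (∀ z ∈ ball (0 : ℂ) 1, ‖f z‖ ≤ 1) ∧
        f 0 = 0 ∧ deriv f 0 = a₁ ∧ deriv (deriv f) 0 = 2 * a₂ := by
  have ha₂ : (0:ℝ) ≤ ‖a₂‖ := norm_nonneg _
  have ha₁1 : ‖a₁‖ ≤ 1 := by nlinarith [norm_nonneg a₁]
  by_cases hlt : ‖a₁‖ < 1
  · -- main case
    set r : ℝ := 1 - ‖a₁‖ ^ 2 with hr_def
    have hr : 0 < r := by nlinarith [norm_nonneg a₁]
    set l : ℂ := a₂ / (r : ℂ) with hl_def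
    have hrC : (r : ℂ) ≠ 0 := by exact_mod_cast hr.ne'
    have hl_norm : ‖l‖ ≤ 1 := by
      rw [hl_def, norm_div, Complex.norm_real, Real.norm_of_nonneg hr.le]
      rw [div_le_one hr]
      linarith
    set c : ℂ := (starRingEnd ℂ) a₁ * l with hc_def
    have hc_norm : ‖c‖ < 1 := by
      rw [hc_def, norm_mul, RCLike.norm_conj]
      calc ‖a₁‖ * ‖l‖ ≤ ‖a₁‖ * 1 := by
            exact mul_le_mul_of_nonneg_left hl_norm (norm_nonneg _)
        _ < 1 := by simpa using hlt
    have hden : ∀ z ∈ ball (0:ℂ) 1, (1 + c * z) ≠ 0 := by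
      intro z hz h0
      rw [mem_ball, dist_zero_right] at hz
      have : ‖c * z‖ < 1 := by
        rw [norm_mul]
        calc ‖c‖ * ‖z‖ ≤ 1 * ‖z‖ := mul_le_mul_of_nonneg_right hc_norm.le (norm_nonneg _)
          _ < 1 := by simpa using hz
      have hcz : c * z = -1 := by linear_combination h0
      rw [hcz] at this
      simp at this
    refine ⟨fun z => z * (a₁ + l * z) / (1 + c * z), ?_, ?_, ?_, ?_, ?_⟩
    · exact DifferentiableOn.div
        ((differentiable_id.mul ((differentiable_const _).add
          (differentiable_id.const_mul l))).differentiableOn)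
        (((differentiable_id.const_mul c).const_add 1).differentiableOn)
        hden
    · intro z hz
      rw [mem_ball, dist_zero_right] at hz
      have hwz : ‖l * z‖ ≤ 1 := by
        rw [norm_mul]
        calc ‖l‖ * ‖z‖ ≤ 1 * 1 :=
            mul_le_mul hl_norm hz.le (norm_nonneg _) zero_le_one
          _ = 1 := by ring
      have key : ‖a₁ + l * z‖ ≤ ‖1 + c * z‖ := by
        have := cf_mobius_le (a := -a₁) (w := l * z) (by simpa using ha₁1) hwz
        simpa [hc_def, sub_neg_eq_add, mul_assoc, add_comm] using this
      rw [norm_div, norm_mul]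
      rcases eq_or_ne (1 + c * z) 0 with h0 | h0
      · exfalso; exact hden z (by simpa [mem_ball, dist_zero_right] using hz) h0
      · rw [div_le_one (norm_pos_iff.2 h0)]
        calc ‖z‖ * ‖a₁ + l * z‖ ≤ 1 * ‖1 + c * z‖ :=
            mul_le_mul hz.le key (norm_nonneg _) zero_le_one
          _ = ‖1 + c * z‖ := one_mul _
    · simp
    · -- deriv at 0
      have hder : ∀ z ∈ ball (0:ℂ) 1,
          HasDerivAt (fun z => z * (a₁ + l * z) / (1 + c * z))
            (((a₁ + 2 * l * z) * (1 + c * z) - z * (a₁ + l * z) * c) / (1 + c * z) ^ 2) z := by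
        intro z hz
        have h1 : HasDerivAt (fun z : ℂ => z * (a₁ + l * z)) (a₁ + 2 * l * z) z := by
          have := (hasDerivAt_id z).mul
            ((hasDerivAt_const z a₁).add ((hasDerivAt_id z).const_mul l))
          exact this.congr_deriv (by simp; ring)
        have h2 : HasDerivAt (fun z : ℂ => 1 + c * z) c z := by
          have := ((hasDerivAt_id z).const_mul c).const_add (1 : ℂ)
          simpa using this
        exact h1.div h2 (hden z hz)
      have h0mem : (0:ℂ) ∈ ball (0:ℂ) 1 := mem_ball_self one_pos
      rw [(hder 0 h0mem).deriv]
      simp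
    · set f : ℂ → ℂ := fun z => z * (a₁ + l * z) / (1 + c * z) with hf_def
      set F : ℂ → ℂ := fun z =>
        ((a₁ + 2 * l * z) * (1 + c * z) - z * (a₁ + l * z) * c) / (1 + c * z) ^ 2 with hF_def
      have hder : ∀ z ∈ ball (0:ℂ) 1, HasDerivAt f (F z) z := by
        intro z hz
        have h1 : HasDerivAt (fun z : ℂ => z * (a₁ + l * z)) (a₁ + 2 * l * z) z := by
          have := (hasDerivAt_id z).mul
            ((hasDerivAt_const z a₁).add ((hasDerivAt_id z).const_mul l))
          exact this.congr_deriv (by simp; ring)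
        have h2 : HasDerivAt (fun z : ℂ => 1 + c * z) c z := by
          have := ((hasDerivAt_id z).const_mul c).const_add (1 : ℂ)
          simpa using this
        exact h1.div h2 (hden z hz)
      have h0mem : (0:ℂ) ∈ ball (0:ℂ) 1 := mem_ball_self one_pos
      have hEq : EqOn (deriv f) F (ball 0 1) := fun z hz => (hder z hz).deriv
      have hev : deriv f =ᶠ[nhds (0:ℂ)] F :=
        Filter.eventuallyEq_of_mem (isOpen_ball.mem_nhds h0mem) hEq
      rw [hev.deriv_eq]
      have hB : HasDerivAt (fun z : ℂ => 1 + c * z) c 0 := by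
        simpa using ((hasDerivAt_id (0:ℂ)).const_mul c).const_add (1 : ℂ)
      have hP : HasDerivAt
          (fun z : ℂ => (a₁ + 2 * l * z) * (1 + c * z) - z * (a₁ + l * z) * c) (2 * l) 0 := by
        have hA : HasDerivAt (fun z : ℂ => a₁ + 2 * l * z) (2 * l) 0 := by
          simpa using ((hasDerivAt_id (0:ℂ)).const_mul (2 * l)).const_add a₁
        have hC : HasDerivAt (fun z : ℂ => z * (a₁ + l * z)) a₁ 0 := by
          have := (hasDerivAt_id (0:ℂ)).mul
            ((hasDerivAt_const (0:ℂ) a₁).add ((hasDerivAt_id (0:ℂ)).const_mul l))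
          exact this.congr_deriv (by simp)
        have := (hA.mul hB).sub (hC.mul_const c)
        exact this.congr_deriv (by simp)
      have hQ : HasDerivAt (fun z : ℂ => (1 + c * z) ^ 2) (2 * c) 0 := by
        have := hB.pow 2
        exact this.congr_deriv (by simp)
      have hne : ((1 : ℂ) + c * 0) ^ 2 ≠ 0 :=
        pow_ne_zero 2 (hden 0 h0mem)
      have hFd := hP.div hQ hne
      rw [hF_def]
      erw [hFd.deriv]
      have hconj : a₁ * (starRingEnd ℂ) a₁ = ((‖a₁‖ ^ 2 : ℝ) : ℂ) := by
        rw [Complex.mul_conj]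
        norm_cast
        rw [Complex.normSq_eq_norm_sq]
      have hrne : ((1:ℂ) - ((‖a₁‖ ^ 2 : ℝ) : ℂ)) ≠ 0 := by
        have : ((1:ℂ) - ((‖a₁‖ ^ 2 : ℝ) : ℂ)) = ((r : ℝ) : ℂ) := by
          rw [hr_def]; push_cast; ring
        rw [this]; exact hrC
      have hlr : l * ((1:ℂ) - ((‖a₁‖ ^ 2 : ℝ) : ℂ)) = a₂ := by
        rw [hl_def]
        have : ((1:ℂ) - ((‖a₁‖ ^ 2 : ℝ) : ℂ)) = ((r : ℝ) : ℂ) := by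
          rw [hr_def]; push_cast; ring
        rw [this]
        field_simp
      simp only [mul_zero, add_zero, zero_mul, sub_zero, one_pow, mul_one, div_one]
      rw [hc_def]
      linear_combination 2 * hlr - 2 * l * hconj
  · -- boundary case: ‖a₁‖ = 1, a₂ = 0
    have he : ‖a₁‖ = 1 := le_antisymm ha₁1 (not_lt.1 hlt)
    have ha₂0 : a₂ = 0 := by
      rw [← norm_eq_zero]
      nlinarith
    refine ⟨fun z => a₁ * z, (differentiable_const a₁ |>.mul differentiable_id).differentiableOn,
      ?_, by simp, ?_, ?_⟩
    · intro z hz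
      rw [mem_ball, dist_zero_right] at hz
      rw [norm_mul, he, one_mul]
      exact hz.le
    · simpa using ((hasDerivAt_id (0:ℂ)).const_mul a₁).deriv
    · have : deriv (fun z : ℂ => a₁ * z) = fun _ => a₁ := by
        funext z; simpa using ((hasDerivAt_id z).const_mul a₁).deriv
      rw [this, deriv_const]
      simp [ha₂0]



lemma cf_forward {f : ℂ → ℂ} {a₁ a₂ : ℂ} (hd : DifferentiableOn ℂ f (ball 0 1))
    (hb : ∀ z ∈ ball (0 : ℂ) 1, ‖f z‖ ≤ 1) (h0 : f 0 = 0)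
    (h1 : deriv f 0 = a₁) (h2 : deriv (deriv f) 0 = 2 * a₂) :
    ‖a₁‖ ^ 2 + ‖a₂‖ ≤ 1 := by
  have h0mem : (0:ℂ) ∈ ball (0:ℂ) 1 := mem_ball_self one_pos
  rcases cf_dichotomy hd hb with hmaps | hconst
  case inr =>
    -- f is constant 0 on the ball
    have hz : ∀ z ∈ ball (0:ℂ) 1, f z = 0 := fun z hz => by rw [hconst hz, h0]
    have hev : f =ᶠ[nhds (0:ℂ)] fun _ => 0 :=
      Filter.eventuallyEq_of_mem (isOpen_ball.mem_nhds h0mem) hz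
    have ha₁ : a₁ = 0 := by rw [← h1, hev.deriv_eq, deriv_const]
    have hderiv0 : ∀ z ∈ ball (0:ℂ) 1, deriv f z = 0 := by
      intro z hzb
      have : f =ᶠ[nhds z] fun _ => 0 :=
        Filter.eventuallyEq_of_mem (isOpen_ball.mem_nhds hzb) hz
      rw [this.deriv_eq, deriv_const]
    have hev2 : deriv f =ᶠ[nhds (0:ℂ)] fun _ => 0 :=
      Filter.eventuallyEq_of_mem (isOpen_ball.mem_nhds h0mem) hderiv0
    have ha₂ : a₂ = 0 := by
      have := h2
      rw [hev2.deriv_eq, deriv_const] at this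
      linear_combination this.symm / 2
    rw [ha₁, ha₂]; norm_num
  case inl =>
  -- g = dslope f 0
  set g : ℂ → ℂ := dslope f 0 with hg_def
  have hg_diff : DifferentiableOn ℂ g (ball 0 1) :=
    (differentiableOn_dslope (isOpen_ball.mem_nhds h0mem)).2 hd
  have hg_bound : ∀ z ∈ ball (0:ℂ) 1, ‖g z‖ ≤ 1 := by
    intro z hzb
    have := Complex.norm_dslope_le_div_of_mapsTo_ball hd (by rw [h0]; exact hmaps.mono_right ball_subset_closedBall) hzb
    simpa using this
  have hg0 : g 0 = a₁ := by rw [hg_def, dslope_same, h1]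
  have hfg : ∀ z, f z = z * g z := by
    intro z
    have := sub_smul_dslope f 0 z
    rw [h0] at this
    have h' : z * dslope f 0 z = f z := by simpa [smul_eq_mul] using this
    rw [hg_def]; exact h'.symm
  have hganal : AnalyticOnNhd ℂ g (ball 0 1) := hg_diff.analyticOnNhd isOpen_ball
  -- deriv g 0 = a₂
  have hderivf : ∀ z ∈ ball (0:ℂ) 1, deriv f z = g z + z * deriv g z := by
    intro z hzb
    have hgz : DifferentiableAt ℂ g z := (hganal z hzb).differentiableAt
    have hdz : HasDerivAt (fun w => w * g w) (1 * g z + z * deriv g z) z :=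
      (hasDerivAt_id z).mul hgz.hasDerivAt
    have : HasDerivAt f (1 * g z + z * deriv g z) z := by
      have hfeq : f = fun w => w * g w := funext hfg
      rw [hfeq]; exact hdz
    rw [this.deriv]; ring
  have hdg0 : DifferentiableAt ℂ (deriv g) 0 :=
    ((hganal.deriv) 0 h0mem).differentiableAt
  have hg00 : DifferentiableAt ℂ g 0 := (hganal 0 h0mem).differentiableAt
  have ha₂ : deriv g 0 = a₂ := by
    have hev : deriv f =ᶠ[nhds (0:ℂ)] fun z => g z + z * deriv g z :=
      Filter.eventuallyEq_of_mem (isOpen_ball.mem_nhds h0mem) hderivf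
    have hD : HasDerivAt (fun z => g z + z * deriv g z)
        (deriv g 0 + (1 * deriv g 0 + 0 * deriv (deriv g) 0)) 0 :=
      hg00.hasDerivAt.add ((hasDerivAt_id 0).mul hdg0.hasDerivAt)
    have := h2
    rw [hev.deriv_eq, hD.deriv] at this
    have h2' : 2 * deriv g 0 = 2 * a₂ := by linear_combination this
    field_simp at h2'
    exact h2'
  have ha₁le : ‖a₁‖ ≤ 1 := by rw [← hg0]; exact hg_bound 0 h0mem
  rcases cf_dichotomy hg_diff hg_bound with hgmaps | hgconst
  case inr =>
    -- g constant
    have hgc : ∀ z ∈ ball (0:ℂ) 1, g z = g 0 := fun z hz => hgconst hz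
    have hevg : g =ᶠ[nhds (0:ℂ)] fun _ => g 0 :=
      Filter.eventuallyEq_of_mem (isOpen_ball.mem_nhds h0mem) hgc
    have : deriv g 0 = 0 := by rw [hevg.deriv_eq, deriv_const]
    rw [← ha₂, this]
    simp only [norm_zero, add_zero]
    nlinarith [norm_nonneg a₁, ha₁le]
  case inl =>
  have ha₁lt : ‖a₁‖ < 1 := by
    rw [← hg0]
    have := hgmaps h0mem
    rwa [mem_ball, dist_zero_right] at this
  -- Möbius transform h
  set h : ℂ → ℂ := fun z => (g z - a₁) / (1 - (starRingEnd ℂ) a₁ * g z) with hh_def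
  have hdenom : ∀ z ∈ ball (0:ℂ) 1, (1 - (starRingEnd ℂ) a₁ * g z) ≠ 0 := by
    intro z hzb heq0
    have hgz1 : ‖g z‖ < 1 := by
      have := hgmaps hzb; rwa [mem_ball, dist_zero_right] at this
    have : ‖(starRingEnd ℂ) a₁ * g z‖ < 1 := by
      rw [norm_mul, RCLike.norm_conj]
      calc ‖a₁‖ * ‖g z‖ ≤ 1 * ‖g z‖ := mul_le_mul_of_nonneg_right ha₁lt.le (norm_nonneg _)
        _ < 1 := by simpa using hgz1
    have hcz : (starRingEnd ℂ) a₁ * g z = 1 := by linear_combination -heq0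
    rw [hcz] at this
    simp at this
  have hh_diff : DifferentiableOn ℂ h (ball 0 1) :=
    DifferentiableOn.div (hg_diff.sub (differentiableOn_const _))
      ((differentiableOn_const _).sub ((differentiableOn_const _).mul hg_diff)) hdenom
  have hh0 : h 0 = 0 := by rw [hh_def]; simp [hg0]
  have hh_maps : MapsTo h (ball 0 1) (ball (h 0) 1) := by
    rw [hh0]
    intro z hzb
    rw [mem_ball, dist_zero_right, hh_def]
    have hgz1 : ‖g z‖ < 1 := by
      have := hgmaps hzb; rwa [mem_ball, dist_zero_right] at this
    have := cf_mobius_lt ha₁lt hgz1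
    rw [norm_div]
    rw [div_lt_one (lt_of_le_of_lt (norm_nonneg _) this)]
    exact this
  have hschwarz : ‖deriv h 0‖ ≤ 1 := by
    have := Complex.norm_deriv_le_div_of_mapsTo_ball hh_diff (hh_maps.mono_right ball_subset_closedBall) one_pos
    simpa using this
  -- compute deriv h 0
  have hu : HasDerivAt (fun z => g z - a₁) (deriv g 0) 0 := hg00.hasDerivAt.sub_const a₁
  have hv : HasDerivAt (fun z => 1 - (starRingEnd ℂ) a₁ * g z)
      (-((starRingEnd ℂ) a₁ * deriv g 0)) 0 := by
    have := (hg00.hasDerivAt.const_mul ((starRingEnd ℂ) a₁)).const_sub (1:ℂ)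
    simpa using this
  have hdh : HasDerivAt h
      ((deriv g 0 * (1 - (starRingEnd ℂ) a₁ * g 0) -
        (g 0 - a₁) * -((starRingEnd ℂ) a₁ * deriv g 0)) /
        (1 - (starRingEnd ℂ) a₁ * g 0) ^ 2) 0 :=
    hu.div hv (hdenom 0 h0mem)
  have hconj : a₁ * (starRingEnd ℂ) a₁ = ((‖a₁‖ : ℂ)) ^ 2 := by
    rw [Complex.mul_conj]
    norm_cast
    rw [Complex.normSq_eq_norm_sq]
  have hrpos : (0:ℝ) < 1 - ‖a₁‖ ^ 2 := by nlinarith [norm_nonneg a₁]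
  have hne : (1:ℂ) - ((‖a₁‖ : ℂ)) ^ 2 ≠ 0 := by
    have hc : ((1:ℂ) - ((‖a₁‖ : ℂ)) ^ 2) = (((1 - ‖a₁‖ ^ 2 : ℝ)) : ℂ) := by push_cast; ring
    rw [hc]
    exact_mod_cast hrpos.ne'
  have hval : deriv h 0 = a₂ / ((1:ℂ) - ((‖a₁‖ : ℂ)) ^ 2) := by
    rw [hdh.deriv, hg0, ← ha₂]
    have hden1 : (1 : ℂ) - (starRingEnd ℂ) a₁ * a₁ = (1:ℂ) - ((‖a₁‖ : ℂ)) ^ 2 := by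
      linear_combination -hconj
    rw [hden1]
    rw [div_eq_div_iff (pow_ne_zero 2 hne) hne]
    ring
  rw [hval] at hschwarz
  have hc : ((1:ℂ) - ((‖a₁‖ : ℂ)) ^ 2) = (((1 - ‖a₁‖ ^ 2 : ℝ)) : ℂ) := by push_cast; ring
  rw [hc, norm_div, Complex.norm_real, Real.norm_of_nonneg hrpos.le,
    div_le_one hrpos] at hschwarz
  linarith

/-- One-variable Carathéodory–Fejér: there is a holomorphic self-map `f` of the closed unit
disc data with `f(0) = 0`, `f′(0) = a₁`, `f″(0) = 2a₂` iff `|a₁|² + |a₂| ≤ 1`. -/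
theorem stmt3 (a₁ a₂ : ℂ) :
    (∃ f : ℂ → ℂ, DifferentiableOn ℂ f (ball 0 1) ∧
        (∀ z ∈ ball (0 : ℂ) 1, ‖f z‖ ≤ 1) ∧
        f 0 = 0 ∧ deriv f 0 = a₁ ∧ deriv (deriv f) 0 = 2 * a₂) ↔
      ‖a₁‖ ^ 2 + ‖a₂‖ ≤ 1 := by
  constructor
  · rintro ⟨f, hd, hb, h0, h1, h2⟩
    exact cf_forward hd hb h0 h1 h2
  · exact cf_backward a₁ a₂
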